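/- For all x with 0 ≤ x ≤ 0.5, g(x) ≥ 0.49 μ x², where g(x) = μ(x·ln(√(x²+1) + x) − √(x²+1) + 1) and μ > 0. -/

import Mathlib

open Real

noncomputable def qq (x : ℝ) : ℝ := x - x^3/6 + 3*x^5/40 - 5*x^7/112
noncomputable def hh (x : ℝ) : ℝ := Real.arsinh x - qq x
noncomputable def rr (x : ℝ) : ℝ := x^2/2 - x^4/24 + x^6/80 - 5*x^8/896
noncomputable def HH (x : ℝ) : ℝ := x * Real.arsinh x - Real.sqrt (1 + x^2) + 1 - rr x

lemma qq_hasDeriv (x : ℝ) : HasDerivAt qq (1 - x^2/2 + 3*x^4/8 - 5*x^6/16) x := by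
  have h3 : HasDerivAt (fun x : ℝ => x - x^3/6 + 3*x^5/40 - 5*x^7/112)
      (1 - (↑3*x^2)/6 + 3*(↑5*x^4)/40 - 5*(↑7*x^6)/112) x :=
    (((hasDerivAt_id x).sub ((hasDerivAt_pow 3 x).div_const 6)).add
      (((hasDerivAt_pow 5 x).const_mul 3).div_const 40)).sub
      (((hasDerivAt_pow 7 x).const_mul 5).div_const 112) |>.congr_deriv (by push_cast; ring)
  exact h3.congr_deriv (by ring)

lemma hh_hasDeriv (x : ℝ) :
    HasDerivAt hh ((Real.sqrt (1+x^2))⁻¹ - (1 - x^2/2 + 3*x^4/8 - 5*x^6/16)) x :=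
  (Real.hasDerivAt_arsinh x).sub (qq_hasDeriv x)

lemma sqrt_inv_ge (x : ℝ) (hx : 0 ≤ x) (hx2 : x ≤ 1/2) :
    1 - x^2/2 + 3*x^4/8 - 5*x^6/16 ≤ (Real.sqrt (1+x^2))⁻¹ := by
  have hpos : (0:ℝ) < 1 + x^2 := by positivity
  have hc : Real.sqrt (1+x^2) ^ 2 = 1 + x^2 := Real.sq_sqrt hpos.le
  have hc0 : 0 < Real.sqrt (1+x^2) := Real.sqrt_pos.mpr hpos
  have hv : x^2 ≤ 1/4 := by nlinarith
  set p : ℝ := 1 - x^2/2 + 3*x^4/8 - 5*x^6/16 with hp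
  set c : ℝ := Real.sqrt (1+x^2)
  have hkey : 1 - p^2 * c^2 = (x^2)^4*(35/64 - 7*x^2/32 + 35*x^4/256 - 25*x^6/256) := by
    rw [hc]; ring
  have h6 : x^2*x^4 ≤ (1/4)*x^4 := mul_le_mul_of_nonneg_right hv (by positivity)
  have hb : (0:ℝ) ≤ 35/64 - 7*x^2/32 + 35*x^4/256 - 25*x^6/256 := by nlinarith [sq_nonneg (x^2)]
  have hkey2 : 0 ≤ 1 - p^2*c^2 := by
    rw [hkey]; exact mul_nonneg (by positivity) hb
  rw [inv_eq_one_div, le_div_iff₀ hc0]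
  nlinarith [sq_nonneg (p*c - 1)]

lemma hh_nonneg (x : ℝ) (hx : 0 ≤ x) (hx2 : x ≤ 1/2) : 0 ≤ hh x := by
  have hmono : MonotoneOn hh (Set.Icc 0 (1/2:ℝ)) := by
    apply monotoneOn_of_deriv_nonneg (convex_Icc _ _)
    · exact fun y _ => ((hh_hasDeriv y).continuousAt).continuousWithinAt
    · exact fun y _ => ((hh_hasDeriv y).differentiableAt).differentiableWithinAt
    · intro y hy
      rw [interior_Icc] at hy
      rw [(hh_hasDeriv y).deriv]
      have := sqrt_inv_ge y hy.1.le hy.2.le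
      linarith
  have h0 : hh 0 = 0 := by simp [hh, qq]
  have := hmono (Set.mem_Icc.mpr ⟨le_refl 0, by norm_num⟩) (Set.mem_Icc.mpr ⟨hx, hx2⟩) hx
  linarith

lemma HH_hasDeriv (x : ℝ) : HasDerivAt HH (hh x) x := by
  have h1 : HasDerivAt (fun x : ℝ => x * Real.arsinh x)
      (1 * Real.arsinh x + x * (Real.sqrt (1+x^2))⁻¹) x :=
    (hasDerivAt_id x).mul (Real.hasDerivAt_arsinh x)
  have h2 : HasDerivAt (fun x : ℝ => Real.sqrt (1+x^2)) (x * (Real.sqrt (1+x^2))⁻¹) x := by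
    have hpos : (0:ℝ) < 1 + x^2 := by positivity
    have h3 : HasDerivAt (fun x : ℝ => 1 + x^2) (2*x) x := by
      have := ((hasDerivAt_pow 2 x).const_add 1)
      simpa using this.congr_deriv (by push_cast; ring)
    have := (Real.hasDerivAt_sqrt hpos.ne').comp x h3
    refine this.congr_deriv ?_
    field_simp
  have h4 : HasDerivAt rr (x - x^3/6 + 3*x^5/40 - 5*x^7/112) x := by
    have h5 := ((((hasDerivAt_pow 2 x).div_const 2).sub ((hasDerivAt_pow 4 x).div_const 24)).add
        ((hasDerivAt_pow 6 x).div_const 80)).sub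
        (((hasDerivAt_pow 8 x).const_mul 5).div_const 896)
    exact h5.congr_deriv (by push_cast; ring)
  have := ((h1.sub h2).add_const 1).sub h4
  refine this.congr_deriv ?_
  unfold hh qq
  ring

lemma HH_nonneg (x : ℝ) (hx : 0 ≤ x) (hx2 : x ≤ 1/2) : 0 ≤ HH x := by
  have hmono : MonotoneOn HH (Set.Icc 0 (1/2:ℝ)) := by
    apply monotoneOn_of_deriv_nonneg (convex_Icc _ _)
    · exact fun y _ => ((HH_hasDeriv y).continuousAt).continuousWithinAt
    · exact fun y _ => ((HH_hasDeriv y).differentiableAt).differentiableWithinAt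
    · intro y hy
      rw [interior_Icc] at hy
      rw [(HH_hasDeriv y).deriv]
      exact hh_nonneg y hy.1.le hy.2.le
  have h0 : HH 0 = 0 := by simp [HH, rr]
  have := hmono (Set.mem_Icc.mpr ⟨le_refl 0, by norm_num⟩) (Set.mem_Icc.mpr ⟨hx, hx2⟩) hx
  linarith

theorem stmt_3 (μ : ℝ) (hμ : 0 < μ)
    (g : ℝ → ℝ)
    (hg : ∀ x, g x = μ * (x * Real.log (Real.sqrt (x ^ 2 + 1) + x) - Real.sqrt (x ^ 2 + 1) + 1)) :
    ∀ x : ℝ, 0 ≤ x → x ≤ 0.5 → 0.49 * μ * x ^ 2 ≤ g x := by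
  intro x hx hx2
  have hx2' : x ≤ 1/2 := by norm_num at hx2 ⊢; linarith
  rw [hg x]
  have harsinh : Real.log (Real.sqrt (x ^ 2 + 1) + x) = Real.arsinh x := by
    rw [Real.arsinh, add_comm (1:ℝ) (x^2), add_comm]
  have hH := HH_nonneg x hx hx2'
  have hr : 0.49 * x^2 ≤ rr x := by
    unfold rr
    have hv : x^2 ≤ 1/4 := by nlinarith
    nlinarith [sq_nonneg x, sq_nonneg (x^2), sq_nonneg (x^3), sq_nonneg (x^4), pow_nonneg hx 6, pow_nonneg hx 8]
  unfold HH at hH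
  rw [harsinh]
  have key : 0.49 * x^2 ≤ x * Real.arsinh x - Real.sqrt (x^2+1) + 1 := by
    rw [add_comm (x^2) 1] at *
    linarith
  calc 0.49 * μ * x ^ 2 = μ * (0.49 * x^2) := by ring
    _ ≤ μ * (x * Real.arsinh x - Real.sqrt (1+x^2) + 1) := by
        apply mul_le_mul_of_nonneg_left _ hμ.le
        rw [add_comm (1:ℝ) (x^2)] at *
        linarith
    _ = μ * (x * Real.arsinh x - Real.sqrt (x^2+1) + 1) := by rw [add_comm (1:ℝ) (x^2)]
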